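/- Let ω = (ω_n)_{n≥0} ∈ {0,1}^ℕ satisfy that the asymptotic frequency of 0's equals 1/2, i.e. (1/n)·#{k < n : ω_k = 0} → 1/2. Let 0 < c < 1/2, a = 1/(2(1−c)), b = 1/(2c), and f₀, f₁ the piecewise linear maps as above. Let x₀ ∈ (0,1) and define x_{n+1} = f_{ω_n}(x_n). Then there are infinitely many n with x_n ≤ 1/2 and infinitely many n with x_n ≥ 1/2. -/

import Mathlib

open Filter Real

noncomputable def f₀ (c x : ℝ) : ℝ :=
  if x ≤ 1 - c then x / (2*(1-c)) else 1 - (1-x) / (2*c)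

noncomputable def f₁ (c x : ℝ) : ℝ :=
  if x ≤ c then x / (2*c) else 1 - (1-x) / (2*(1-c))

private lemma aux_pow_tendsto (p q : ℝ) (hp : 0 < p) (hq : 0 < q) (hpq : 1 < p*q)
    (A : ℕ → ℕ) (hA : ∀ n, A n ≤ n)
    (hAf : Tendsto (fun n => (A n : ℝ)/n) atTop (nhds (1/2))) :
    Tendsto (fun n => p^(A n) * q^(n - A n)) atTop atTop := by
  set L := (Real.log p + Real.log q)/2 with hLdef
  have hL : 0 < L := by
    have h := Real.log_pos hpq
    rw [Real.log_mul hp.ne' hq.ne'] at h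
    rw [hLdef]; linarith
  have hSd : Tendsto (fun n => (A n:ℝ)/n * Real.log p + (1 - (A n:ℝ)/n) * Real.log q)
      atTop (nhds L) := by
    have h1 := hAf.mul_const (Real.log p)
    have h2 := ((tendsto_const_nhds (x := (1:ℝ))).sub hAf).mul_const (Real.log q)
    have h3 := h1.add h2
    have heq : (1/2:ℝ)*Real.log p + (1 - 1/2)*Real.log q = L := by rw [hLdef]; ring
    rw [heq] at h3
    exact h3
  have hev : ∀ᶠ n in atTop,
      L/2 * n ≤ (A n:ℝ) * Real.log p + ((n - A n : ℕ):ℝ) * Real.log q := by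
    have hlt := hSd.eventually (lt_mem_nhds (show L/2 < L by linarith))
    filter_upwards [hlt, eventually_ge_atTop 1] with n hn hn1
    have hn0 : (0:ℝ) < n := by exact_mod_cast hn1
    have hcast : ((n - A n : ℕ):ℝ) = (n:ℝ) - A n := by
      rw [Nat.cast_sub (hA n)]
    rw [hcast]
    have hmul : L/2 * n ≤ ((A n:ℝ)/n * Real.log p + (1 - (A n:ℝ)/n) * Real.log q) * n :=
      mul_le_mul_of_nonneg_right (le_of_lt hn) hn0.le
    have he : ((A n:ℝ)/n * Real.log p + (1 - (A n:ℝ)/n) * Real.log q) * n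
        = (A n:ℝ) * Real.log p + ((n:ℝ) - A n) * Real.log q := by
      field_simp
    rw [← he]; exact hmul
  have hg : Tendsto (fun n => (A n:ℝ) * Real.log p + ((n - A n:ℕ):ℝ) * Real.log q)
      atTop atTop := by
    refine tendsto_atTop_mono' atTop hev ?_
    exact (tendsto_natCast_atTop_atTop).const_mul_atTop (by linarith : (0:ℝ) < L/2)
  have hcomp := Real.tendsto_exp_atTop.comp hg
  refine hcomp.congr (fun n => ?_)
  show Real.exp ((A n:ℝ) * Real.log p + ((n - A n:ℕ):ℝ) * Real.log q) = _
  rw [Real.exp_add, Real.exp_nat_mul, Real.exp_nat_mul, Real.exp_log hp, Real.exp_log hq]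

private lemma freq_shift (ω : ℕ → Fin 2)
    (hfreq : Tendsto
      (fun n => (((Finset.range n).filter (fun k => ω k = 0)).card : ℝ) / n)
      atTop (nhds (1/2))) (N : ℕ) :
    Tendsto
      (fun n => (((Finset.range n).filter (fun k => ω (k+N) = 0)).card : ℝ) / n)
      atTop (nhds (1/2)) := by
  set C : ℕ → ℕ := fun n => ((Finset.range n).filter (fun k => ω k = 0)).card with hC
  set A : ℕ → ℕ := fun n => ((Finset.range n).filter (fun k => ω (k+N) = 0)).card with hAdef
  have hCrec : ∀ m, C (m+1) = C m + (if ω m = 0 then 1 else 0) := by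
    intro m
    rw [hC]
    simp only [Finset.range_add_one, Finset.filter_insert]
    split
    · rw [Finset.card_insert_of_notMem (by simp)]
    · simp
  have hArec : ∀ m, A (m+1) = A m + (if ω (m+N) = 0 then 1 else 0) := by
    intro m
    rw [hAdef]
    simp only [Finset.range_add_one, Finset.filter_insert]
    split
    · rw [Finset.card_insert_of_notMem (by simp)]
    · simp
  have hsum : ∀ n, C (n+N) = C N + A n := by
    intro n
    induction n with
    | zero => simp [hAdef]
    | succ n ih =>
      have e : n + 1 + N = (n + N) + 1 := by omega
      rw [e, hCrec, hArec, ih]; omega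
  have h1 : Tendsto (fun n => (C (n+N):ℝ)/((n:ℝ)+N)) atTop (nhds (1/2)) := by
    have := hfreq.comp (tendsto_add_atTop_nat N)
    refine this.congr (fun n => ?_)
    simp only [Function.comp]
    push_cast
    rfl
  have h2 : Tendsto (fun n : ℕ => ((n:ℝ)+N)/n) atTop (nhds 1) := by
    have hN0 := tendsto_const_div_atTop_nhds_zero_nat (N:ℝ)
    have := (tendsto_const_nhds (x := (1:ℝ))).add hN0
    rw [add_zero] at this
    refine this.congr' ?_
    filter_upwards [eventually_ge_atTop 1] with n hn
    have hn0 : (n:ℝ) ≠ 0 := by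
      have : (0:ℝ) < n := by exact_mod_cast hn
      exact this.ne'
    field_simp
  have h3 : Tendsto (fun n => (C (n+N):ℝ)/n) atTop (nhds (1/2)) := by
    have := h1.mul h2
    rw [mul_one] at this
    refine this.congr' ?_
    filter_upwards [eventually_ge_atTop 1] with n hn
    have hn0 : (n:ℝ) ≠ 0 := by
      have : (0:ℝ) < n := by exact_mod_cast hn
      exact this.ne'
    have hnN : (n:ℝ)+N ≠ 0 := by positivity
    field_simp
  have h4 : Tendsto (fun n : ℕ => (C N:ℝ)/n) atTop (nhds 0) :=
    tendsto_const_div_atTop_nhds_zero_nat _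
  have := h3.sub h4
  rw [show (1/2 - 0 : ℝ) = 1/2 by ring] at this
  refine this.congr (fun n => ?_)
  rw [div_sub_div_same]
  congr 1
  have := hsum n
  push_cast [this]
  ring

private lemma core (ω : ℕ → Fin 2)
    (hfreq : Tendsto
      (fun n => (((Finset.range n).filter (fun k => ω k = 0)).card : ℝ) / n)
      atTop (nhds (1/2)))
    (N : ℕ) (p q : ℝ) (hp : 0 < p) (hq : 0 < q) (hpq : 1 < p*q)
    (y : ℕ → ℝ) (hy0 : 0 < y 0)
    (hrec : ∀ n, y (n+1) = (if ω (n+N) = 0 then p else q) * y n)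
    (hb : ∀ n, y n ≤ 1/2) : False := by
  set A : ℕ → ℕ := fun n => ((Finset.range n).filter (fun k => ω (k+N) = 0)).card with hAdef
  have hA : ∀ n, A n ≤ n := fun n =>
    (Finset.card_filter_le _ _).trans (Finset.card_range n).le
  have hAf : Tendsto (fun n => (A n : ℝ)/n) atTop (nhds (1/2)) := freq_shift ω hfreq N
  have hArec : ∀ m, A (m+1) = A m + (if ω (m+N) = 0 then 1 else 0) := by
    intro m
    rw [hAdef]
    simp only [Finset.range_add_one, Finset.filter_insert]
    split
    · rw [Finset.card_insert_of_notMem (by simp)]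
    · simp
  have hy : ∀ n, y n = p^(A n) * q^(n - A n) * y 0 := by
    intro n
    induction n with
    | zero => simp [hAdef]
    | succ n ih =>
      rw [hrec n, ih, hArec n]
      by_cases hω : ω (n+N) = 0
      · rw [if_pos hω, if_pos hω]
        have e1 : n + 1 - (A n + 1) = n - A n := by omega
        rw [e1, pow_succ]
        ring
      · rw [if_neg hω, if_neg hω]
        have e1 : n + 1 - (A n + 0) = (n - A n) + 1 := by
          have := hA n; omega
        rw [add_zero] at e1 ⊢
        rw [e1, pow_succ]
        ring
  have hP := aux_pow_tendsto p q hp hq hpq A hA hAf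
  have hPy : Tendsto (fun n => p^(A n) * q^(n - A n) * y 0) atTop atTop :=
    hP.atTop_mul_const hy0
  have := (hPy.eventually_gt_atTop (1/2)).exists
  obtain ⟨n, hn⟩ := this
  rw [← hy n] at hn
  linarith [hb n]

theorem stmt_13 (c : ℝ) (hc0 : 0 < c) (hc1 : c < 1/2)
    (ω : ℕ → Fin 2)
    (hfreq : Filter.Tendsto
      (fun n => (((Finset.range n).filter (fun k => ω k = 0)).card : ℝ) / n)
      Filter.atTop (nhds (1/2)))
    (x : ℕ → ℝ) (hx0 : x 0 ∈ Set.Ioo (0:ℝ) 1)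
    (hstep : ∀ n, x (n+1) = if ω n = 0 then f₀ c (x n) else f₁ c (x n)) :
    (∃ᶠ n in Filter.atTop, x n ≤ 1/2) ∧ (∃ᶠ n in Filter.atTop, 1/2 ≤ x n) := by
  have h2c : (0:ℝ) < 2*c := by linarith
  have h2c' : (0:ℝ) < 2*(1-c) := by linarith
  have hpq : 1 < (1/(2*c)) * (1/(2*(1-c))) := by
    rw [div_mul_div_comm, one_mul, lt_div_iff₀ (by nlinarith)]
    nlinarith [sq_nonneg (1-2*c)]
  have hpq' : 1 < (1/(2*(1-c))) * (1/(2*c)) := by rw [mul_comm]; exact hpq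
  have hpos : ∀ n, 0 < x n ∧ x n < 1 := by
    intro n
    induction n with
    | zero => exact ⟨hx0.1, hx0.2⟩
    | succ n ih =>
      rw [hstep n]
      simp only [f₀, f₁]
      split_ifs with hω hb1 hb2
      · exact ⟨div_pos ih.1 h2c', by rw [div_lt_one h2c']; linarith [ih.2]⟩
      · have hgt : 1 - c < x n := not_le.mp hb1
        have ht : (1 - x n)/(2*c) < 1 := by rw [div_lt_one h2c]; linarith
        have ht0 : 0 < (1 - x n)/(2*c) := div_pos (by linarith [ih.2]) h2c
        exact ⟨by linarith, by linarith⟩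
      · exact ⟨div_pos ih.1 h2c, by rw [div_lt_one h2c]; linarith⟩
      · have hgt : c < x n := not_le.mp hb2
        have ht : (1 - x n)/(2*(1-c)) < 1 := by rw [div_lt_one h2c']; linarith
        have ht0 : 0 < (1 - x n)/(2*(1-c)) := div_pos (by linarith [ih.2]) h2c'
        exact ⟨by linarith, by linarith⟩
  constructor
  · by_contra h
    rw [Filter.not_frequently] at h
    simp only [not_le] at h
    obtain ⟨N, hN⟩ := Filter.eventually_atTop.mp h
    refine core ω hfreq N (1/(2*c)) (1/(2*(1-c)))
      (by positivity) (by positivity) hpq (fun n => 1 - x (n+N)) ?_ ?_ ?_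
    · simp only [Nat.zero_add]; linarith [(hpos N).2]
    · intro n
      have e : n + 1 + N = (n + N) + 1 := by omega
      show 1 - x (n+1+N) = _
      rw [e]
      have hx1 : 1/2 < x (n+N) := hN _ (Nat.le_add_left N n)
      have hx2 : 1/2 < x ((n+N)+1) := hN _ (by omega)
      rw [hstep (n+N)]
      by_cases hω : ω (n+N) = 0
      · rw [if_pos hω, if_pos hω]
        have hgt : ¬ x (n+N) ≤ 1 - c := by
          intro hle
          rw [hstep (n+N), if_pos hω] at hx2
          have : f₀ c (x (n+N)) ≤ 1/2 := by
            rw [f₀, if_pos hle, div_le_iff₀ h2c']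
            linarith
          linarith
        rw [f₀, if_neg hgt]
        field_simp
        ring
      · rw [if_neg hω, if_neg hω]
        have hgt : ¬ x (n+N) ≤ c := by intro hle; linarith
        rw [f₁, if_neg hgt]
        field_simp
        ring
    · intro n
      have := hN (n+N) (Nat.le_add_left N n)
      linarith
  · by_contra h
    rw [Filter.not_frequently] at h
    simp only [not_le] at h
    obtain ⟨N, hN⟩ := Filter.eventually_atTop.mp h
    refine core ω hfreq N (1/(2*(1-c))) (1/(2*c))
      (by positivity) (by positivity) hpq' (fun n => x (n+N)) ?_ ?_ ?_
    · simp only [Nat.zero_add]; exact (hpos N).1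
    · intro n
      have e : n + 1 + N = (n + N) + 1 := by omega
      show x (n+1+N) = _
      rw [e]
      have hx1 : x (n+N) < 1/2 := hN _ (Nat.le_add_left N n)
      have hx2 : x ((n+N)+1) < 1/2 := hN _ (by omega)
      rw [hstep (n+N)]
      by_cases hω : ω (n+N) = 0
      · rw [if_pos hω, if_pos hω]
        have hle : x (n+N) ≤ 1 - c := by linarith
        rw [f₀, if_pos hle]
        ring
      · rw [if_neg hω, if_neg hω]
        have hle : x (n+N) ≤ c := by
          by_contra h'
          push_neg at h'
          rw [hstep (n+N), if_neg hω] at hx2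
          rw [f₁, if_neg (not_le.mpr h')] at hx2
          have : (1 - x (n+N))/(2*(1-c)) < 1/2 := by
            rw [div_lt_iff₀ h2c']
            linarith
          linarith
        rw [f₁, if_pos hle]
        ring
    · intro n
      have := hN (n+N) (Nat.le_add_left N n)
      linarith
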